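/- arXiv:1510.00179 — 2 statements merged into one kernel-verified Lean document; each statement's English description precedes it below -/
import Mathlib

section
/- Let X have GPD(ξ, ψ) distribution with ξ ≠ 0, support (0, σ) where σ = ∞ if ξ > 0 and σ = ψ/|ξ| if ξ < 0. Let c = ψ/ξ and define Z = -1/(X + c) + 1/c. Then Z has GPD(-ξ, ξ²/ψ) distribution, i.e., P(Z > z) = (1 - ξz/(ξ²/ψ))^{1/ξ} on 0 < z < σ_z, where σ_z = ξ/ψ if ξ > 0 and σ_z = ∞ if ξ < 0. -/
open MeasureTheory Filter Topology

/-- Theorem 9 (second part): if `X ~ GPD(ξ, ψ)` with `ξ ≠ 0` and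
`c = ψ/ξ`, then `Z = -1/(X + c) + 1/c` has `GPD(-ξ, ξ²/ψ)` distribution:
`P(Z > z) = (1 - ξz/(ξ²/ψ))^(1/ξ)` for `0 < z < σ_z`, where `σ_z = ξ/ψ`
if `ξ > 0` and `σ_z = ∞` if `ξ < 0`. -/
theorem gpd_transform_sign_change {Ω : Type*} [MeasurableSpace Ω]
    (μ : Measure Ω) [IsProbabilityMeasure μ] (X : Ω → ℝ) (hX : Measurable X)
    (ξ ψ : ℝ) (hξ : ξ ≠ 0) (hψ : 0 < ψ)
    (hpos : ∀ᵐ ω ∂μ, 0 < X ω)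
    (htail : ∀ x : ℝ, 0 < x → (ξ < 0 → x < ψ / (-ξ)) →
      μ {ω | X ω > x} = ENNReal.ofReal ((1 + ξ * x / ψ) ^ (-1/ξ)))
    (htailEnd : ξ < 0 → ∀ x : ℝ, ψ / (-ξ) ≤ x → μ {ω | X ω > x} = 0) :
    ∀ z : ℝ, 0 < z → (0 < ξ → z < ξ / ψ) →
      μ {ω | -1/(X ω + ψ/ξ) + 1/(ψ/ξ) > z}
        = ENNReal.ofReal ((1 - ξ * z / (ξ^2/ψ)) ^ (1/ξ)) := by
  intro z hz hzu
  set c : ℝ := ψ / ξ with hc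
  have hcne : c ≠ 0 := div_ne_zero hψ.ne' hξ
  have hc2 : 0 < c ^ 2 := by positivity
  have h1cz : 0 < 1 - c * z := by
    rcases hξ.lt_or_gt with h | h
    · have hcneg : c < 0 := div_neg_of_pos_of_neg hψ h
      nlinarith
    · have hc0 : 0 < c := div_pos hψ h
      have hz' : z < ξ / ψ := hzu h
      have hcξ : c * (ξ / ψ) = 1 := by
        rw [hc]; field_simp
      nlinarith
  set x₀ : ℝ := c ^ 2 * z / (1 - c * z) with hx0def
  have hx0pos : 0 < x₀ := div_pos (mul_pos hc2 hz) h1cz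
  -- the key pointwise equivalence
  have key : ∀ x : ℝ, 0 < x → (ξ < 0 → x < ψ / (-ξ)) →
      (-1/(x + c) + 1/c > z ↔ x > x₀) := by
    intro x hx hxupper
    have hden : 0 < c * (x + c) := by
      rcases hξ.lt_or_gt with h | h
      · have hcneg : c < 0 := div_neg_of_pos_of_neg hψ h
        have hσ : x < ψ / (-ξ) := hxupper h
        have hσc : ψ / (-ξ) = -c := by rw [hc, div_neg]
        rw [hσc] at hσ
        nlinarith
      · have hc0 : 0 < c := div_pos hψ h
        nlinarith
    have hxc : x + c ≠ 0 := by
      intro h0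
      rw [h0, mul_zero] at hden
      exact lt_irrefl 0 hden
    have hZ : -1/(x + c) + 1/c = x / (c * (x + c)) := by
      rw [div_add_div _ _ hxc hcne, div_eq_div_iff (mul_ne_zero hxc hcne) hden.ne']
      ring
    rw [gt_iff_lt, hZ, lt_div_iff₀ hden, gt_iff_lt, hx0def, div_lt_iff₀ h1cz]
    constructor <;> intro h <;> nlinarith
  -- a.e. upper bound : X < -c when ξ < 0
  have hσnull : ξ < 0 → μ {ω | ψ / (-ξ) ≤ X ω} = 0 := by
    intro h
    have hσpos : 0 < ψ / (-ξ) := div_pos hψ (by linarith)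
    set σ : ℝ := ψ / (-ξ) with hσdef
    have hp : 0 < -1/ξ := by
      rw [neg_div]
      have : 0 < 1 / (-ξ) := div_pos one_pos (by linarith)
      rw [div_neg] at this
      linarith
    -- tendsto
    have h1 : Tendsto (fun ε : ℝ => (-ξ) * ε / ψ) (𝓝[>] 0) (𝓝 0) := by
      apply Tendsto.mono_left _ nhdsWithin_le_nhds
      have hcnt : Continuous (fun ε : ℝ => (-ξ) * ε / ψ) := by continuity
      have := hcnt.tendsto 0
      simpa using this
    have h2 : Tendsto (fun ε : ℝ => ((-ξ) * ε / ψ) ^ (-1/ξ)) (𝓝[>] 0) (𝓝 0) := by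
      have hcont := (Real.continuousAt_rpow_const 0 (-1/ξ) (Or.inr hp.le)).tendsto
      have := hcont.comp h1
      simpa [Function.comp_def, Real.zero_rpow hp.ne'] using this
    have h3 : Tendsto (fun ε : ℝ => ENNReal.ofReal (((-ξ) * ε / ψ) ^ (-1/ξ)))
        (𝓝[>] 0) (𝓝 0) := by
      have := (ENNReal.continuous_ofReal.tendsto 0).comp h2
      simpa [Function.comp_def] using this
    have hev : ∀ᶠ ε in 𝓝[>] (0:ℝ),
        μ {ω | σ ≤ X ω} ≤ ENNReal.ofReal (((-ξ) * ε / ψ) ^ (-1/ξ)) := by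
      filter_upwards [Ioo_mem_nhdsGT_of_mem ⟨le_refl 0, hσpos⟩] with ε hε
      obtain ⟨hε0, hεσ⟩ := hε
      have hmono : μ {ω | σ ≤ X ω} ≤ μ {ω | X ω > σ - ε} := by
        apply measure_mono
        intro ω hω
        simp only [Set.mem_setOf_eq] at *
        linarith
      have htub := htail (σ - ε) (by linarith) (fun _ => by rw [hσdef]; linarith)
      have hvv : 1 + ξ * (σ - ε) / ψ = (-ξ) * ε / ψ := by
        rw [hσdef, div_neg]
        field_simp
        ring
      rw [hvv] at htub
      calc μ {ω | σ ≤ X ω} ≤ μ {ω | X ω > σ - ε} := hmono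
        _ = _ := htub
    have := ge_of_tendsto h3 hev
    exact le_antisymm this zero_le
  -- a.e. set equality
  have haeq : {ω | -1/(X ω + c) + 1/c > z} =ᵐ[μ] {ω | X ω > x₀} := by
    rw [Filter.eventuallyEq_set]
    have hup : ∀ᵐ ω ∂μ, ξ < 0 → X ω < ψ / (-ξ) := by
      rcases hξ.lt_or_gt with h | h
      · have := hσnull h
        have : ∀ᵐ ω ∂μ, ¬ (ψ / (-ξ) ≤ X ω) := by
          rw [ae_iff]
          simpa using this
        filter_upwards [this] with ω hω _
        linarith [not_le.mp hω]
      · filter_upwards with ω h'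
        linarith
    filter_upwards [hpos, hup] with ω hω hωu
    exact key (X ω) hω hωu
  rw [measure_congr haeq]
  have hside : ξ < 0 → x₀ < ψ / (-ξ) := by
    intro h
    have hcneg : c < 0 := div_neg_of_pos_of_neg hψ h
    have hσc : ψ / (-ξ) = -c := by rw [hc, div_neg]
    rw [hσc, hx0def, div_lt_iff₀ h1cz]
    nlinarith
  rw [htail x₀ hx0pos hside]
  congr 1
  have hne : ξ - ψ * z ≠ 0 := by
    intro h0
    have hcz : c * z = 1 := by
      rw [hc, div_mul_eq_mul_div, div_eq_one_iff_eq hξ]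
      linarith
    linarith
  have hval : 1 + ξ * x₀ / ψ = (1 - c * z)⁻¹ := by
    rw [hx0def, hc]
    field_simp
    ring
  have hrhs : 1 - ξ * z / (ξ^2/ψ) = 1 - c * z := by
    rw [hc]
    field_simp
  rw [hval, hrhs, Real.inv_rpow h1cz.le, ← Real.rpow_neg h1cz.le, neg_div, neg_neg]
end

section
/- Let ξ > 0, ψ > 0 and c = ψ/ξ. A random variable X has GPD(ξ, ψ) distribution if and only if Z = X/(c(X + c)) has GPD(-ξ, ξ²/ψ) distribution with support (0, ξ/ψ). -/
open MeasureTheory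

private lemma gpd_mono_iff {c a b : ℝ} (hc : 0 < c) (ha : 0 < a) (hb : 0 < b) :
    b / (c * (b + c)) < a / (c * (a + c)) ↔ b < a := by
  rw [div_lt_div_iff₀ (by positivity) (by positivity)]
  constructor <;> intro h <;> nlinarith [mul_pos hc hc]

private lemma gpd_inv_rpow {s y : ℝ} (hs : 0 < s) : (s⁻¹) ^ y = s ^ (-y) := by
  rw [Real.inv_rpow hs.le, ← Real.rpow_neg hs.le]

/-- Corollary 10: let `ξ > 0`, `ψ > 0` and `c = ψ/ξ`.  A positive random
variable `X` has GPD(ξ, ψ) distribution iff `Z = X/(c(X + c))` has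
GPD(-ξ, ξ²/ψ) distribution, with support `(0, ξ/ψ)`:
`P(Z > z) = (1 - ψz/ξ)^(1/ξ)` for `0 < z < ξ/ψ` and `P(Z ≥ ξ/ψ) = 0`. -/
theorem gpd_iff_transformed_gpd {Ω : Type*} [MeasurableSpace Ω]
    (μ : Measure Ω) [IsProbabilityMeasure μ] (X : Ω → ℝ) (hX : Measurable X)
    (ξ ψ : ℝ) (hξ : 0 < ξ) (hψ : 0 < ψ)
    (hpos : ∀ᵐ ω ∂μ, 0 < X ω) :
    (∀ x : ℝ, 0 < x →
        μ {ω | X ω > x} = ENNReal.ofReal ((1 + ξ * x / ψ) ^ (-1/ξ)))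
      ↔ ((∀ z : ℝ, 0 < z → z < ξ/ψ →
            μ {ω | X ω / ((ψ/ξ) * (X ω + ψ/ξ)) > z}
              = ENNReal.ofReal ((1 - ψ * z / ξ) ^ (1/ξ))) ∧
          ∀ z : ℝ, ξ/ψ ≤ z →
            μ {ω | X ω / ((ψ/ξ) * (X ω + ψ/ξ)) ≥ z} = 0) := by
  set c : ℝ := ψ / ξ with hcdef
  have hc : 0 < c := by positivity
  have hinv : ξ / ψ = 1 / c := by rw [hcdef, one_div_div]
  -- Z < 1/c whenever X > 0
  have hZlt : ∀ a : ℝ, 0 < a → a / (c * (a + c)) < 1 / c := by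
    intro a ha
    rw [div_lt_div_iff₀ (by positivity) hc]
    nlinarith [mul_pos hc hc]
  constructor
  · intro hXgpd
    constructor
    · intro z hz0 hz
      rw [hinv] at hz
      have h1cz : 0 < 1 - c * z := by
        have h := (lt_div_iff₀ hc).mp hz
        nlinarith
      set x : ℝ := c ^ 2 * z / (1 - c * z) with hxdef
      have hx : 0 < x := by positivity
      have hzx : z = x / (c * (x + c)) := by
        have hne : 1 - z * c ≠ 0 := by rw [mul_comm]; exact h1cz.ne'
        rw [eq_div_iff (by positivity), hxdef]; field_simp [hne]; ring
      have hsets : μ {ω | X ω / (c * (X ω + c)) > z} = μ {ω | X ω > x} := by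
        apply measure_congr
        filter_upwards [hpos] with ω hω
        simp only [Set.mem_setOf_eq, eq_iff_iff, gt_iff_lt]
        rw [hzx]
        exact gpd_mono_iff hc hω hx
      rw [hsets, hXgpd x hx]
      congr 1
      have hsx : (0:ℝ) < 1 + ξ * x / ψ := by
        have : ξ * x / ψ = x / c := by rw [hcdef]; field_simp
        rw [this]; positivity
      have hkey : 1 - ψ * z / ξ = (1 + ξ * x / ψ)⁻¹ := by
        have h1 : ψ * z / ξ = c * z := by rw [hcdef]; field_simp
        have h2 : ξ * x / ψ = x / c := by rw [hcdef]; field_simp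
        have hmul : (1 + ξ * x / ψ) * (1 - ψ * z / ξ) = 1 := by
          rw [h1, h2, hxdef]
          field_simp [h1cz.ne']
          ring
        exact eq_inv_of_mul_eq_one_right hmul
      rw [hkey, gpd_inv_rpow hsx, neg_div]
    · intro z hz
      rw [hinv] at hz
      rw [measure_eq_zero_iff_ae_notMem]
      filter_upwards [hpos] with ω hω
      simp only [Set.mem_setOf_eq, not_le]
      exact lt_of_lt_of_le (hZlt _ hω) hz
  · rintro ⟨hZgpd, -⟩ x hx
    set z : ℝ := x / (c * (x + c)) with hzdef
    have hz0 : 0 < z := by positivity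
    have hz1 : z < ξ / ψ := by rw [hinv, hzdef]; exact hZlt x hx
    have hsets : μ {ω | X ω > x} = μ {ω | X ω / (c * (X ω + c)) > z} := by
      apply measure_congr
      filter_upwards [hpos] with ω hω
      simp only [Set.mem_setOf_eq, eq_iff_iff, gt_iff_lt]
      exact (gpd_mono_iff hc hω hx).symm
    rw [hsets, hZgpd z hz0 hz1]
    congr 1
    have hsx : (0:ℝ) < 1 + ξ * x / ψ := by
      have : ξ * x / ψ = x / c := by rw [hcdef]; field_simp
      rw [this]; positivity
    have hkey : 1 - ψ * z / ξ = (1 + ξ * x / ψ)⁻¹ := by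
      have h1 : ψ * z / ξ = c * z := by rw [hcdef]; field_simp
      have h2 : ξ * x / ψ = x / c := by rw [hcdef]; field_simp
      have hxc : x + c ≠ 0 := by positivity
      have hmul : (1 + ξ * x / ψ) * (1 - ψ * z / ξ) = 1 := by
        rw [h1, h2, hzdef]
        field_simp
        ring
      exact eq_inv_of_mul_eq_one_right hmul
    rw [hkey, gpd_inv_rpow hsx, neg_div]
end
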